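/- Assume either z_i z_j < 0 for some i, j, or z_j q_0 < 0 for all j, and let φ* be the unique zero of f. Fix φ_0 ∈ ℝ and, for each L > 0, let φ_L be the unique twice continuously differentiable solution of φ″ + f(φ) = 0 on [−L/2, L/2] with φ_L(−L/2) = φ_L(L/2) = φ_0, and set σ(L) = |φ_L′(−L/2)|. Then σ(L) = max { |φ_L′(x)| : x ∈ [−L/2, L/2] }; if φ_0 ≠ φ* then L ↦ σ(L) is strictly increasing; and in all cases σ(L) → √(2 (F(φ*) − F(φ_0))) as L → ∞ (saturation of the surface charge density). -/

import Mathlib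

open Real Filter Set Topology



section Abstract

variable {f F : ℝ → ℝ} {φs : ℝ}

lemma fpos (hfa : StrictAnti f) (hs : f φs = 0) {y : ℝ} (hy : y < φs) : 0 < f y := by
  have := hfa hy; rwa [hs] at this

lemma fneg (hfa : StrictAnti f) (hs : f φs = 0) {y : ℝ} (hy : φs < y) : f y < 0 := by
  have := hfa hy; rwa [hs] at this

lemma FmonoIic (hFd : ∀ y, HasDerivAt F (f y) y) (hfa : StrictAnti f) (hs : f φs = 0) :
    StrictMonoOn F (Iic φs) := by
  apply strictMonoOn_of_deriv_pos (convex_Iic φs)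
    (fun y _ => (hFd y).differentiableAt.continuousAt.continuousWithinAt)
  intro y hy
  rw [interior_Iic] at hy
  rw [(hFd y).deriv]
  exact fpos hfa hs hy

lemma FantiIci (hFd : ∀ y, HasDerivAt F (f y) y) (hfa : StrictAnti f) (hs : f φs = 0) :
    StrictAntiOn F (Ici φs) := by
  apply strictAntiOn_of_deriv_neg (convex_Ici φs)
    (fun y _ => (hFd y).differentiableAt.continuousAt.continuousWithinAt)
  intro y hy
  rw [interior_Ici] at hy
  rw [(hFd y).deriv]
  exact fneg hfa hs hy

lemma Fmax' (hFd : ∀ y, HasDerivAt F (f y) y) (hfa : StrictAnti f) (hs : f φs = 0)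
    {y : ℝ} (hy : y ≠ φs) : F y < F φs := by
  rcases lt_or_gt_of_ne hy with h | h
  · exact FmonoIic hFd hfa hs (le_of_lt h) (self_mem_Iic) h
  · exact FantiIci hFd hfa hs (self_mem_Ici) (le_of_lt h) h

lemma Fmax (hFd : ∀ y, HasDerivAt F (f y) y) (hfa : StrictAnti f) (hs : f φs = 0)
    (y : ℝ) : F y ≤ F φs := by
  rcases eq_or_ne y φs with h | h
  · rw [h]
  · exact (Fmax' hFd hfa hs h).le

end Abstract

section Concrete

variable {N : ℕ} (z c : Fin N → ℝ) (q0 : ℝ)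

lemma concrete_fd (y : ℝ) :
    HasDerivAt (fun t => q0 + ∑ j, z j * c j * Real.exp (-(z j) * t))
      (-∑ j, z j ^ 2 * c j * Real.exp (-(z j) * y)) y := by
  have h2 : ∀ j : Fin N, HasDerivAt (fun t => z j * c j * Real.exp (-(z j) * t))
      (z j * c j * (Real.exp (-(z j) * y) * (-(z j) * 1))) y := fun j =>
    (((hasDerivAt_id y).const_mul (-(z j))).exp).const_mul _
  have hsum : HasDerivAt (fun t => ∑ j, z j * c j * Real.exp (-(z j) * t))
      (∑ j, z j * c j * (Real.exp (-(z j) * y) * (-(z j) * 1))) y :=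
    HasDerivAt.fun_sum (fun j _ => h2 j)
  have : HasDerivAt (fun t => q0 + ∑ j, z j * c j * Real.exp (-(z j) * t))
      (0 + ∑ j, z j * c j * (Real.exp (-(z j) * y) * (-(z j) * 1))) y := (hasDerivAt_const y q0).add hsum
  convert this using 1
  rw [zero_add, ← Finset.sum_neg_distrib]
  exact Finset.sum_congr rfl fun j _ => by ring

lemma concrete_Fd (y : ℝ) :
    HasDerivAt (fun t => q0 * t - ∑ j, c j * Real.exp (-(z j) * t))
      (q0 + ∑ j, z j * c j * Real.exp (-(z j) * y)) y := by
  have h1 : HasDerivAt (fun t : ℝ => q0 * t) (q0 * 1) y := (hasDerivAt_id y).const_mul q0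
  have h2 : ∀ j : Fin N, HasDerivAt (fun t => c j * Real.exp (-(z j) * t))
      (c j * (Real.exp (-(z j) * y) * (-(z j) * 1))) y := fun j =>
    (((hasDerivAt_id y).const_mul (-(z j))).exp).const_mul _
  have hsum : HasDerivAt (fun t => ∑ j, c j * Real.exp (-(z j) * t))
      (∑ j, c j * (Real.exp (-(z j) * y) * (-(z j) * 1))) y :=
    HasDerivAt.fun_sum (fun j _ => h2 j)
  have : HasDerivAt (fun t => q0 * t - ∑ j, c j * Real.exp (-(z j) * t))
      (q0 * 1 - ∑ j, c j * (Real.exp (-(z j) * y) * (-(z j) * 1))) y := h1.sub hsum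
  convert this using 1
  rw [sub_eq_add_neg, ← Finset.sum_neg_distrib]
  congr 1
  · ring
  · exact Finset.sum_congr rfl fun j _ => by ring

lemma concrete_f'neg (hN : 1 ≤ N) (hz : ∀ j, z j ≠ 0) (hc : ∀ j, 0 < c j) (y : ℝ) :
    -∑ j, z j ^ 2 * c j * Real.exp (-(z j) * y) < 0 := by
  rw [neg_neg_iff_pos]
  have : Nonempty (Fin N) := Fin.pos_iff_nonempty.mp (by omega)
  apply Finset.sum_pos
  · intro j _
    exact mul_pos (mul_pos (sq_pos_of_ne_zero (hz j)) (hc j)) (Real.exp_pos _)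
  · exact Finset.univ_nonempty

end Concrete


section Solution

variable {f F f' : ℝ → ℝ} {φs a b φ0 : ℝ} {φ u : ℝ → ℝ}

lemma energy (hFd : ∀ y, HasDerivAt F (f y) y) (hab : a ≤ b)
    (hsol : ∀ x ∈ Icc a b, HasDerivWithinAt φ (u x) (Icc a b) x ∧
      HasDerivWithinAt u (-(f (φ x))) (Icc a b) x) :
    ∀ x ∈ Icc a b, u x ^ 2 / 2 + F (φ x) = u a ^ 2 / 2 + F (φ a) := by
  apply constant_of_has_deriv_right_zero
  · have hφc : ContinuousOn φ (Icc a b) := fun x hx => ((hsol x hx).1).continuousWithinAt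
    have huc : ContinuousOn u (Icc a b) := fun x hx => ((hsol x hx).2).continuousWithinAt
    have hFc : Continuous F := by
      have : Differentiable ℝ F := fun y => (hFd y).differentiableAt
      exact this.continuous
    exact (((huc.pow 2).div_const 2).add (hFc.comp_continuousOn hφc))
  · intro x hx
    have hx' : x ∈ Icc a b := Ico_subset_Icc_self hx
    have hφ := (hsol x hx').1
    have hu := (hsol x hx').2
    have h1 : HasDerivWithinAt (fun t => u t ^ 2 / 2)
        ((2 : ℕ) * u x ^ 1 * (-(f (φ x))) / 2) (Icc a b) x := (hu.pow 2).div_const 2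
    have h2 : HasDerivWithinAt (fun t => F (φ t)) (f (φ x) * u x) (Icc a b) x :=
      (hFd (φ x)).comp_hasDerivWithinAt x hφ
    have h3 : HasDerivWithinAt (fun t => u t ^ 2 / 2 + F (φ t))
        ((2 : ℕ) * u x ^ 1 * (-(f (φ x))) / 2 + f (φ x) * u x) (Icc a b) x := h1.add h2
    have h4 : HasDerivWithinAt (fun t => u t ^ 2 / 2 + F (φ t)) 0 (Icc a b) x := by
      convert h3 using 1; push_cast; ring
    exact h4.mono_of_mem_nhdsWithin (Icc_mem_nhdsGE_of_mem hx)

lemma minFφ (hFd : ∀ y, HasDerivAt F (f y) y) (hfa : StrictAnti f) (hs : f φs = 0)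
    (hab : a ≤ b)
    (hsol : ∀ x ∈ Icc a b, HasDerivWithinAt φ (u x) (Icc a b) x ∧
      HasDerivWithinAt u (-(f (φ x))) (Icc a b) x)
    (hbb : φ b = φ a) :
    ∀ x ∈ Icc a b, F (φ a) ≤ F (φ x) := by
  have hφc : ContinuousOn φ (Icc a b) := fun x hx => ((hsol x hx).1).continuousWithinAt
  have hFc : Continuous F := Differentiable.continuous (fun y => (hFd y).differentiableAt)
  have hgc : ContinuousOn (fun x => F (φ x)) (Icc a b) := hFc.comp_continuousOn hφc
  obtain ⟨x0, hx0, hmin⟩ := isCompact_Icc.exists_isMinOn (nonempty_Icc.2 hab) hgc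
  have hkey : F (φ a) ≤ F (φ x0) := by
    rcases eq_or_lt_of_le hx0.1 with h | h
    · rw [← h]
    rcases eq_or_lt_of_le hx0.2 with h' | h'
    · rw [h', hbb]
    -- x0 interior
    have hloc : IsLocalMin (fun x => F (φ x)) x0 := hmin.isLocalMin (Icc_mem_nhds h h')
    have hφ' : HasDerivAt φ (u x0) x0 := ((hsol x0 hx0).1).hasDerivAt (Icc_mem_nhds h h')
    have hd : HasDerivAt (fun x => F (φ x)) (f (φ x0) * u x0) x0 := (hFd (φ x0)).comp x0 hφ'
    have h0 : f (φ x0) * u x0 = 0 := hloc.hasDerivAt_eq_zero hd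
    rcases mul_eq_zero.1 h0 with h0 | h0
    · -- critical point of F : global max
      have : φ x0 = φs := hfa.injective (by rw [h0, hs])
      rw [this]
      exact Fmax hFd hfa hs _
    · -- turning point: use energy
      have he := energy hFd hab hsol x0 hx0
      rw [h0] at he
      nlinarith [sq_nonneg (u a)]
  intro x hx
  exact le_trans hkey (hmin hx)

lemma E_le_Fmax (hFd : ∀ y, HasDerivAt F (f y) y) (hfa : StrictAnti f) (hs : f φs = 0)
    (hab : a < b)
    (hsol : ∀ x ∈ Icc a b, HasDerivWithinAt φ (u x) (Icc a b) x ∧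
      HasDerivWithinAt u (-(f (φ x))) (Icc a b) x)
    (hbb : φ b = φ a) :
    u a ^ 2 / 2 + F (φ a) ≤ F φs := by
  have hφc : ContinuousOn φ (Icc a b) := fun x hx => ((hsol x hx).1).continuousWithinAt
  obtain ⟨x0, hx0, hu0⟩ := exists_hasDerivAt_eq_zero hab hφc hbb.symm
    (fun x hx => ((hsol x (Ioo_subset_Icc_self hx)).1).hasDerivAt (Icc_mem_nhds hx.1 hx.2))
  have he := energy hFd hab.le hsol x0 (Ioo_subset_Icc_self hx0)
  rw [hu0] at he
  have := Fmax hFd hfa hs (φ x0)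
  nlinarith

end Solution
section Length

variable {f F f' : ℝ → ℝ} {φs a b φ0 : ℝ} {φ u : ℝ → ℝ}

lemma phi_lt_phis (hFd : ∀ y, HasDerivAt F (f y) y) (hfa : StrictAnti f) (hs : f φs = 0)
    (hab : a ≤ b)
    (hsol : ∀ x ∈ Icc a b, HasDerivWithinAt φ (u x) (Icc a b) x ∧
      HasDerivWithinAt u (-(f (φ x))) (Icc a b) x)
    (h0 : φ a < φs)
    (hE : u a ^ 2 / 2 + F (φ a) < F φs) :
    ∀ x ∈ Icc a b, φ x < φs := by
  have hφc : ContinuousOn φ (Icc a b) := fun x hx => ((hsol x hx).1).continuousWithinAt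
  have hFlt : ∀ x ∈ Icc a b, F (φ x) < F φs := by
    intro x hx
    have he := energy hFd hab hsol x hx
    nlinarith [sq_nonneg (u x)]
  intro x hx
  by_contra hcon
  push_neg at hcon
  have hne : φ x ≠ φs := by
    intro h
    exact absurd (h ▸ hFlt x hx) (lt_irrefl _)
  have hgt : φs < φ x := lt_of_le_of_ne hcon (Ne.symm hne)
  have hsub : Icc a x ⊆ Icc a b := Icc_subset_Icc le_rfl hx.2
  have : φs ∈ Icc (φ a) (φ x) := ⟨h0.le, hgt.le⟩
  obtain ⟨x2, hx2, hφx2⟩ := intermediate_value_Icc hx.1 (hφc.mono hsub) this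
  have := hFlt x2 (hsub hx2)
  rw [hφx2] at this
  exact absurd this (lt_irrefl _)

lemma length_le (hFd : ∀ y, HasDerivAt F (f y) y) (hfa : StrictAnti f) (hs : f φs = 0)
    (hab : a < b)
    (hsol : ∀ x ∈ Icc a b, HasDerivWithinAt φ (u x) (Icc a b) x ∧
      HasDerivWithinAt u (-(f (φ x))) (Icc a b) x)
    (hbb : φ b = φ a) (h0 : φ a < φs)
    {r : ℝ} (hr : r < φs) (hr0 : φ a ≤ r)
    (hrE : u a ^ 2 / 2 + F (φ a) ≤ F r) :
    b - a ≤ 2 * Real.sqrt (2 * (F φs - F (φ a))) / f r := by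
  have hφc : ContinuousOn φ (Icc a b) := fun x hx => ((hsol x hx).1).continuousWithinAt
  have huc : ContinuousOn u (Icc a b) := fun x hx => ((hsol x hx).2).continuousWithinAt
  have hFrs : F r < F φs := FmonoIic hFd hfa hs (le_of_lt hr) self_mem_Iic hr
  have hElt : u a ^ 2 / 2 + F (φ a) < F φs := lt_of_le_of_lt hrE hFrs
  have hlt := phi_lt_phis hFd hfa hs hab.le hsol h0 hElt
  have hmin := minFφ hFd hfa hs hab.le hsol hbb
  -- φ x ≤ r
  have hler : ∀ x ∈ Icc a b, φ x ≤ r := by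
    intro x hx
    by_contra hcon
    push_neg at hcon
    have h1 : F r < F (φ x) := FmonoIic hFd hfa hs (le_of_lt hr) (le_of_lt (hlt x hx)) hcon
    have he := energy hFd hab.le hsol x hx
    nlinarith [sq_nonneg (u x)]
  have hfr : 0 < f r := fpos hfa hs hr
  have hflb : ∀ x ∈ Icc a b, f r ≤ f (φ x) := fun x hx => hfa.antitone (hler x hx)
  -- u decreases with slope ≤ -f r
  have hw : ∀ x ∈ Icc a b, ∀ y ∈ Icc a b, x ≤ y → u y + f r * y ≤ u x + f r * x := by
    have := antitoneOn_of_deriv_nonpos (f := fun t => u t + f r * t) (convex_Icc a b)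
      (huc.add (continuous_const.mul continuous_id).continuousOn)
      (fun x hx => by
        rw [interior_Icc] at hx
        exact (((((hsol x (Ioo_subset_Icc_self hx)).2).hasDerivAt
          (Icc_mem_nhds hx.1 hx.2)).add ((hasDerivAt_id x).const_mul (f r))).differentiableAt).differentiableWithinAt)
      (fun x hx => by
        rw [interior_Icc] at hx
        have hd : HasDerivAt (fun t => u t + f r * t) (-(f (φ x)) + f r * 1) x :=
          (((hsol x (Ioo_subset_Icc_self hx)).2).hasDerivAt
            (Icc_mem_nhds hx.1 hx.2)).add ((hasDerivAt_id x).const_mul (f r))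
        rw [hd.deriv]
        have := hflb x (Ioo_subset_Icc_self hx)
        linarith)
    intro x hx y hy hxy
    exact this hx hy hxy
  have hub : ∀ x ∈ Icc a b, |u x| ≤ Real.sqrt (2 * (F φs - F (φ a))) := by
    intro x hx
    have he := energy hFd hab.le hsol x hx
    have h1 : u x ^ 2 ≤ 2 * (F φs - F (φ a)) := by nlinarith [hmin x hx, Fmax hFd hfa hs (φ x), sq_nonneg (u a), E_le_Fmax hFd hfa hs hab hsol hbb]
    calc |u x| = Real.sqrt (u x ^ 2) := (Real.sqrt_sq_eq_abs _).symm
    _ ≤ _ := Real.sqrt_le_sqrt h1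
  have key := hw a (left_mem_Icc.2 hab.le) b (right_mem_Icc.2 hab.le) hab.le
  have h2 : f r * (b - a) ≤ u a - u b := by linarith
  have h3 : u a - u b ≤ 2 * Real.sqrt (2 * (F φs - F (φ a))) := by
    have ha' := hub a (left_mem_Icc.2 hab.le)
    have hb' := hub b (right_mem_Icc.2 hab.le)
    have := abs_le.1 ha'
    have := abs_le.1 hb'
    linarith [this.1, this.2]
  rw [le_div_iff₀ hfr]
  nlinarith
end Length
section Gronwall

variable {f F f' : ℝ → ℝ} {φs a b φ0 : ℝ} {φ u : ℝ → ℝ}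

lemma E_ne_Fmax (hFd : ∀ y, HasDerivAt F (f y) y) (hfd : ∀ y, HasDerivAt f (f' y) y)
    (hf'cont : Continuous f')
    (hfa : StrictAnti f) (hs : f φs = 0) (hab : a < b)
    (hsol : ∀ x ∈ Icc a b, HasDerivWithinAt φ (u x) (Icc a b) x ∧
      HasDerivWithinAt u (-(f (φ x))) (Icc a b) x)
    (hbb : φ b = φ a) (h0 : φ a ≠ φs) :
    u a ^ 2 / 2 + F (φ a) ≠ F φs := by
  intro hEeq
  have hφc : ContinuousOn φ (Icc a b) := fun x hx => ((hsol x hx).1).continuousWithinAt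
  have hFc : Continuous F := Differentiable.continuous (fun y => (hFd y).differentiableAt)
  -- Rolle point
  obtain ⟨x0, hx0, hu0⟩ := exists_hasDerivAt_eq_zero hab hφc hbb.symm
    (fun x hx => ((hsol x (Ioo_subset_Icc_self hx)).1).hasDerivAt (Icc_mem_nhds hx.1 hx.2))
  have hx0' : x0 ∈ Icc a b := Ioo_subset_Icc_self hx0
  have he0 := energy hFd hab.le hsol x0 hx0'
  rw [hu0, hEeq] at he0
  have hφx0 : φ x0 = φs := by
    by_contra hne
    have := Fmax' hFd hfa hs hne
    simp only [ne_eq, zero_pow, OfNat.ofNat_ne_zero, not_false_eq_true, zero_div, zero_add] at he0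
    rw [he0] at this
    exact absurd this (lt_irrefl _)
  -- bounds on the image of φ
  obtain ⟨xl, hxl, hminφ⟩ := isCompact_Icc.exists_isMinOn (nonempty_Icc.2 hab.le) hφc
  obtain ⟨xh, hxh, hmaxφ⟩ := isCompact_Icc.exists_isMaxOn (nonempty_Icc.2 hab.le) hφc
  set J : Set ℝ := Icc (φ xl) (φ xh) with hJ
  have himg : ∀ x ∈ Icc a b, φ x ∈ J := fun x hx => ⟨hminφ hx, hmaxφ hx⟩
  have hφsJ : φs ∈ J := hφx0 ▸ himg x0 hx0'
  -- bound on f'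
  obtain ⟨ym, hym, hMm⟩ := isCompact_Icc.exists_isMaxOn (⟨φs, hφsJ⟩ : J.Nonempty)
    ((continuous_abs.comp hf'cont).continuousOn)
  set M : ℝ := |f' ym| with hM
  have hM0 : 0 ≤ M := abs_nonneg _
  have hMb : ∀ y ∈ J, |f' y| ≤ M := fun y hy => by simpa using hMm hy
  -- Lipschitz bound for f
  have hLip : ∀ y ∈ J, |f y| ≤ M * |y - φs| := by
    intro y hy
    have := Convex.norm_image_sub_le_of_norm_hasDerivWithin_le
      (f := f) (f' := f') (s := J)
      (fun t ht => (hfd t).hasDerivWithinAt) (fun t ht => hMb t ht) (convex_Icc _ _) hφsJ hy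
    simpa [hs, Real.norm_eq_abs] using this
  -- quadratic bound for F near φs
  have hQuad : ∀ y ∈ J, F φs - F y ≤ M * (y - φs) ^ 2 := by
    intro y hy
    rcases lt_trichotomy y φs with h | h | h
    · obtain ⟨ξ, hξ, hξs⟩ := exists_hasDerivAt_eq_slope F f h hFc.continuousOn
        (fun t _ => hFd t)
      have hξJ : ξ ∈ J := ⟨le_trans hy.1 hξ.1.le, le_trans hξ.2.le hφsJ.2⟩
      have h1 : F φs - F y = f ξ * (φs - y) := by
        rw [hξs]
        exact (div_mul_cancel₀ _ (ne_of_gt (by linarith : (0:ℝ) < φs - y))).symm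
      have h2 : |f ξ| ≤ M * |ξ - φs| := hLip ξ hξJ
      have h3 : |ξ - φs| ≤ |y - φs| := by
        rw [abs_sub_comm y φs, abs_of_nonpos (by linarith [hξ.2.le] : ξ - φs ≤ 0),
          abs_of_nonneg (by linarith [hξ.1.le] : (0:ℝ) ≤ φs - y)]
        linarith [hξ.1.le]
      calc F φs - F y = f ξ * (φs - y) := h1
        _ ≤ |f ξ * (φs - y)| := le_abs_self _
        _ = |f ξ| * |φs - y| := abs_mul _ _
        _ ≤ (M * |y - φs|) * |φs - y| :=
            mul_le_mul_of_nonneg_right (h2.trans (mul_le_mul_of_nonneg_left h3 hM0)) (abs_nonneg _)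
        _ ≤ M * (y - φs) ^ 2 := by
            rw [abs_sub_comm φs y]
            nlinarith [abs_mul_abs_self (y - φs), abs_nonneg (y - φs), sq_abs (y - φs)]
    · rw [h]; simp [sq_nonneg, mul_nonneg hM0 (sq_nonneg _)]
    · obtain ⟨ξ, hξ, hξs⟩ := exists_hasDerivAt_eq_slope F f h hFc.continuousOn
        (fun t _ => hFd t)
      have hξJ : ξ ∈ J := ⟨le_trans hφsJ.1 hξ.1.le, le_trans hξ.2.le hy.2⟩
      have h1 : F φs - F y = f ξ * (φs - y) := by
        have h1' : f ξ = (F y - F φs) / (y - φs) := hξs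
        rw [h1']
        have hne : y - φs ≠ 0 := ne_of_gt (by linarith : (0:ℝ) < y - φs)
        field_simp
        ring
      have h2 : |f ξ| ≤ M * |ξ - φs| := hLip ξ hξJ
      have h3 : |ξ - φs| ≤ |y - φs| := by
        rw [abs_of_nonneg (by linarith [hξ.1.le] : (0:ℝ) ≤ ξ - φs),
          abs_of_nonneg (by linarith [hξ.2.le] : (0:ℝ) ≤ y - φs)]
        linarith [hξ.2.le]
      calc F φs - F y = f ξ * (φs - y) := h1
        _ ≤ |f ξ * (φs - y)| := le_abs_self _
        _ = |f ξ| * |φs - y| := abs_mul _ _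
        _ ≤ (M * |y - φs|) * |φs - y| :=
            mul_le_mul_of_nonneg_right (h2.trans (mul_le_mul_of_nonneg_left h3 hM0)) (abs_nonneg _)
        _ ≤ M * (y - φs) ^ 2 := by
            rw [abs_sub_comm φs y]
            nlinarith [abs_mul_abs_self (y - φs), abs_nonneg (y - φs), sq_abs (y - φs)]
  -- pointwise bound |u| ≤ K |φ - φs|
  set K : ℝ := Real.sqrt (2 * M) with hK
  have hub : ∀ x ∈ Icc a b, |u x| ≤ K * |φ x - φs| := by
    intro x hx
    have he := energy hFd hab.le hsol x hx
    rw [hEeq] at he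
    have h1 : u x ^ 2 = 2 * (F φs - F (φ x)) := by linarith
    have h2 : u x ^ 2 ≤ 2 * M * (φ x - φs) ^ 2 := by
      have := hQuad (φ x) (himg x hx)
      nlinarith
    calc |u x| = Real.sqrt (u x ^ 2) := (Real.sqrt_sq_eq_abs _).symm
      _ ≤ Real.sqrt (2 * M * (φ x - φs) ^ 2) := Real.sqrt_le_sqrt h2
      _ = K * |φ x - φs| := by
          rw [Real.sqrt_mul (by linarith : (0:ℝ) ≤ 2 * M), Real.sqrt_sq_eq_abs]
  -- Gronwall on [x0, b]
  have hgr := norm_le_gronwallBound_of_norm_deriv_right_le (f := fun x => φ x - φs)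
    (f' := u) (δ := 0) (K := K) (ε := 0) (a := x0) (b := b)
    ((hφc.mono (Icc_subset_Icc hx0.1.le le_rfl)).sub continuousOn_const)
    (fun x hx => by
      have hxI : x ∈ Ioo a b := ⟨lt_of_lt_of_le hx0.1 hx.1, hx.2⟩
      exact ((((hsol x (Ioo_subset_Icc_self hxI)).1).hasDerivAt
        (Icc_mem_nhds hxI.1 hxI.2)).sub_const φs).hasDerivWithinAt)
    (by simp [hφx0])
    (fun x hx => by
      have hxI : x ∈ Icc a b := ⟨le_trans hx0.1.le hx.1, hx.2.le⟩
      simpa [Real.norm_eq_abs] using (hub x hxI))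
  have hvb := hgr b (right_mem_Icc.2 hx0.2.le)
  rw [gronwallBound_ε0_δ0] at hvb
  have : φ b = φs := by
    have := norm_le_zero_iff.1 hvb
    linarith [sub_eq_zero.1 this]
  exact h0 (hbb ▸ this)

end Gronwall
section Key

variable {f F f' : ℝ → ℝ} {φs a b : ℝ} {φ u : ℝ → ℝ}

lemma key (hFd : ∀ y, HasDerivAt F (f y) y) (hfd : ∀ y, HasDerivAt f (f' y) y)
    (hf'neg : ∀ y, f' y < 0) (hf'cont : Continuous f') (hs : f φs = 0)
    (hab : a < b)
    (hsol : ∀ x ∈ Icc a b, HasDerivWithinAt φ (u x) (Icc a b) x ∧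
      HasDerivWithinAt u (-(f (φ x))) (Icc a b) x)
    (hbb : φ b = φ a) (h0 : φ a < φs) :
    ∃ r : ℝ, φ a ≤ r ∧ r < φs ∧ F r = u a ^ 2 / 2 + F (φ a) ∧ 0 < u a ∧
      b - a = 2 * u a / f (φ a)
        - 2 * ∫ y in (φ a)..r, Real.sqrt (2 * (F r - F y)) * f' y / f y ^ 2 := by
  have hfa : StrictAnti f := strictAnti_of_deriv_neg
    (fun y => by rw [(hfd y).deriv]; exact hf'neg y)
  have hφc : ContinuousOn φ (Icc a b) := fun x hx => ((hsol x hx).1).continuousWithinAt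
  have huc : ContinuousOn u (Icc a b) := fun x hx => ((hsol x hx).2).continuousWithinAt
  have hFc : Continuous F := Differentiable.continuous (fun y => (hFd y).differentiableAt)
  have hfc : Continuous f := Differentiable.continuous (fun y => (hfd y).differentiableAt)
  have hφ' : ∀ x ∈ Ioo a b, HasDerivAt φ (u x) x := fun x hx =>
    ((hsol x (Ioo_subset_Icc_self hx)).1).hasDerivAt (Icc_mem_nhds hx.1 hx.2)
  have hu' : ∀ x ∈ Ioo a b, HasDerivAt u (-(f (φ x))) x := fun x hx =>
    ((hsol x (Ioo_subset_Icc_self hx)).2).hasDerivAt (Icc_mem_nhds hx.1 hx.2)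
  have haI : a ∈ Icc a b := left_mem_Icc.2 hab.le
  have hbI : b ∈ Icc a b := right_mem_Icc.2 hab.le
  set E : ℝ := u a ^ 2 / 2 + F (φ a) with hEdef
  clear_value E
  have hE1 : F (φ a) ≤ E := by nlinarith [sq_nonneg (u a), hEdef]
  have hE2 : E ≤ F φs := by rw [hEdef]; exact E_le_Fmax hFd hfa hs hab hsol hbb
  have hE3 : E ≠ F φs := by rw [hEdef]; exact E_ne_Fmax hFd hfd hf'cont hfa hs hab hsol hbb (ne_of_lt h0)
  have hElt : E < F φs := lt_of_le_of_ne hE2 hE3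
  -- the turning value r
  obtain ⟨r, hrmem, hFr⟩ := intermediate_value_Icc h0.le hFc.continuousOn ⟨hE1, hE2⟩
  have hrlt : r < φs := by
    rcases eq_or_lt_of_le hrmem.2 with h | h
    · exfalso; exact hE3 ((h ▸ hFr).symm)
    · exact h
  have hElt' : u a ^ 2 / 2 + F (φ a) < F φs := by rw [← hEdef]; exact hElt
  have hlt : ∀ x ∈ Icc a b, φ x < φs := phi_lt_phis hFd hfa hs hab.le hsol h0 hElt'
  have hmin : ∀ x ∈ Icc a b, F (φ a) ≤ F (φ x) := minFφ hFd hfa hs hab.le hsol hbb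
  have hler : ∀ x ∈ Icc a b, φ x ≤ r := by
    intro x hx
    by_contra hcon
    push_neg at hcon
    have h1 : F r < F (φ x) := FmonoIic hFd hfa hs hrlt.le (hlt x hx).le hcon
    have he := energy hFd hab.le hsol x hx
    rw [hFr] at h1
    nlinarith [sq_nonneg (u x), hEdef]
  have hfpos : ∀ x ∈ Icc a b, 0 < f (φ x) := fun x hx => fpos hfa hs (hlt x hx)
  have hfrpos : 0 < f r := fpos hfa hs hrlt
  have hfφa : 0 < f (φ a) := hfpos a haI
  -- E is strictly above F (φ a)
  have hEgt : F (φ a) < E := by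
    rcases eq_or_lt_of_le hE1 with h | h
    · exfalso
      have huzero : ∀ x ∈ Icc a b, u x = 0 := by
        intro x hx
        have he := energy hFd hab.le hsol x hx
        have := hmin x hx
        nlinarith [sq_nonneg (u x), hEdef, h]
      set m : ℝ := (a + b) / 2 with hm
      have hmI : m ∈ Ioo a b := ⟨by simp [hm]; linarith, by simp [hm]; linarith⟩
      have h1 : HasDerivAt u 0 m := by
        have heq : u =ᶠ[𝓝 m] (fun _ => (0 : ℝ)) :=
          eventually_of_mem (Icc_mem_nhds hmI.1 hmI.2) (fun x hx => huzero x hx)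
        exact (hasDerivAt_const m (0 : ℝ)).congr_of_eventuallyEq heq
      have h2 := (hu' m hmI).unique h1
      have h3 : f (φ m) = 0 := by linarith
      have h4 : φ m = φs := hfa.injective (by rw [h3, hs])
      exact absurd h4 (ne_of_lt (hlt m (Ioo_subset_Icc_self hmI)))
    · exact h
  have hune : u a ≠ 0 := by
    intro h
    rw [h] at hEdef
    simp at hEdef
    rw [hEdef] at hEgt
    exact absurd hEgt (lt_irrefl _)
  -- u is strictly decreasing
  have hustrict : StrictAntiOn u (Icc a b) := by
    apply strictAntiOn_of_deriv_neg (convex_Icc a b) huc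
    intro x hx
    rw [interior_Icc] at hx
    rw [(hu' x hx).deriv]
    have := hfpos x (Ioo_subset_Icc_self hx)
    linarith
  have hua : 0 < u a := by
    rcases lt_trichotomy (u a) 0 with h | h | h
    · exfalso
      have hφstrict : StrictAntiOn φ (Icc a b) := by
        apply strictAntiOn_of_deriv_neg (convex_Icc a b) hφc
        intro x hx
        rw [interior_Icc] at hx
        rw [(hφ' x hx).deriv]
        exact lt_of_lt_of_le (hustrict haI (Ioo_subset_Icc_self hx) hx.1) h.le
      have := hφstrict haI hbI hab
      rw [hbb] at this
      exact absurd this (lt_irrefl _)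
    · exact absurd h hune
    · exact h
  have hub : u b = -u a := by
    have he := energy hFd hab.le hsol b hbI
    rw [hbb] at he
    have h1 : u b ^ 2 = u a ^ 2 := by linarith
    have h2 : u b < u a := hustrict haI hbI hab
    have h3 : (u b - u a) * (u b + u a) = 0 := by nlinarith
    rcases mul_eq_zero.1 h3 with h | h
    · exact absurd (by linarith : u b = u a) (ne_of_lt h2)
    · linarith
  -- the turning point x_m
  obtain ⟨x_m, hxmI, hum⟩ := intermediate_value_Icc' hab.le huc
    (⟨by rw [hub]; linarith, hua.le⟩ : (0 : ℝ) ∈ Icc (u b) (u a))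
  have hxma : x_m ≠ a := fun h => by rw [h] at hum; exact hune hum
  have hxmb : x_m ≠ b := fun h => by rw [h, hub] at hum; linarith
  have hxmo : x_m ∈ Ioo a b := ⟨lt_of_le_of_ne hxmI.1 (Ne.symm hxma), lt_of_le_of_ne hxmI.2 hxmb⟩
  have hφxm : φ x_m = r := by
    have he := energy hFd hab.le hsol x_m hxmI
    rw [hum] at he
    have h1 : F (φ x_m) = F r := by rw [hFr]; nlinarith [hEdef]
    exact (FmonoIic hFd hfa hs).injOn (le_of_lt (hlt x_m hxmI)) hrlt.le h1
  -- signs of u on the two branches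
  have husign1 : ∀ x ∈ Icc a x_m, 0 ≤ u x := by
    intro x hx
    rcases eq_or_lt_of_le hx.2 with h | h
    · rw [h, hum]
    · have := hustrict ⟨hx.1, le_trans hx.2 hxmI.2⟩ hxmI h
      rw [hum] at this
      exact this.le
  have husign2 : ∀ x ∈ Icc x_m b, u x ≤ 0 := by
    intro x hx
    rcases eq_or_lt_of_le hx.1 with h | h
    · rw [← h, hum]
    · have := hustrict hxmI ⟨le_trans hxmI.1 hx.1, hx.2⟩ h
      rw [hum] at this
      exact this.le
  -- the substitution integrand and its primitive
  set gneg : ℝ → ℝ := fun y => Real.sqrt (2 * (F r - F y)) * f' y / f y ^ 2 with hgneg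
  have hgnegc : ContinuousOn gneg (Iio φs) := by
    apply ContinuousOn.div
    · exact ((continuous_sqrt.comp (continuous_const.mul (continuous_const.sub hFc))).mul
        hf'cont).continuousOn
    · exact (hfc.pow 2).continuousOn
    · exact fun y hy => pow_ne_zero _ (ne_of_gt (fpos hfa hs hy))
  set G : ℝ → ℝ := fun y => ∫ t in (φ a)..y, gneg t with hG
  have hGd : ∀ y ∈ Iio φs, HasDerivAt G (gneg y) y := by
    intro y hy
    have hsub : uIcc (φ a) y ⊆ Iio φs := fun t ht => lt_of_le_of_lt ht.2 (max_lt h0 hy)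
    apply intervalIntegral.integral_hasDerivAt_right
    · exact (hgnegc.mono hsub).intervalIntegrable
    · exact (ContinuousOn.stronglyMeasurableAtFilter isOpen_Iio hgnegc) y hy
    · exact hgnegc.continuousAt (Iio_mem_nhds hy)
  have hGc : ContinuousOn G (Iio φs) := fun y hy =>
    ((hGd y hy).continuousAt).continuousWithinAt
  have hGφc : ContinuousOn (fun x => G (φ x)) (Icc a b) :=
    hGc.comp hφc (fun x hx => hlt x hx)
  -- within-derivatives of the auxiliary functions
  have hdivc : ContinuousOn (fun t => u t / f (φ t)) (Icc a b) :=
    huc.div (hfc.comp_continuousOn hφc) (fun x hx => ne_of_gt (hfpos x hx))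
  have hder : ∀ x ∈ Icc a b,
      HasDerivWithinAt (fun t => u t / f (φ t))
        ((-(f (φ x)) * f (φ x) - u x * (f' (φ x) * u x)) / f (φ x) ^ 2) (Icc a b) x := by
    intro x hx
    exact ((hsol x hx).2).div ((hfd (φ x)).comp_hasDerivWithinAt x ((hsol x hx).1))
      (ne_of_gt (hfpos x hx))
  have hGder : ∀ x ∈ Icc a b,
      HasDerivWithinAt (fun t => G (φ t)) (gneg (φ x) * u x) (Icc a b) x := fun x hx =>
    (hGd (φ x) (hlt x hx)).comp_hasDerivWithinAt x ((hsol x hx).1)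
  -- sqrt identity
  have hsqrt : ∀ x ∈ Icc a b, Real.sqrt (2 * (F r - F (φ x))) = |u x| := by
    intro x hx
    have he := energy hFd hab.le hsol x hx
    have h1 : 2 * (F r - F (φ x)) = u x ^ 2 := by rw [hFr]; linarith [hEdef]
    rw [h1, Real.sqrt_sq_eq_abs]
  -- first constancy: on [a, x_m]
  have hconst1 : ∀ x ∈ Icc a x_m, (fun t => u t / f (φ t) + t + G (φ t)) x
      = (fun t => u t / f (φ t) + t + G (φ t)) a := by
    apply constant_of_has_deriv_right_zero
    · exact ((hdivc.mono (Icc_subset_Icc le_rfl hxmI.2)).add continuousOn_id).add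
        (hGφc.mono (Icc_subset_Icc le_rfl hxmI.2))
    · intro x hx
      have hxI : x ∈ Icc a b := ⟨hx.1, le_trans hx.2.le hxmI.2⟩
      have hxIco : x ∈ Ico a b := ⟨hx.1, lt_of_lt_of_le hx.2 hxmI.2⟩
      have hd := ((hder x hxI).add (hasDerivWithinAt_id x _)).add (hGder x hxI)
      have hzero : (-(f (φ x)) * f (φ x) - u x * (f' (φ x) * u x)) / f (φ x) ^ 2 + 1
          + gneg (φ x) * u x = 0 := by
        have hx1 : 0 ≤ u x := husign1 x ⟨hx.1, hx.2.le⟩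
        have h2 : Real.sqrt (2 * (F r - F (φ x))) = u x := by
          rw [hsqrt x hxI, abs_of_nonneg hx1]
        rw [hgneg]
        simp only
        rw [h2]
        have hfne : f (φ x) ≠ 0 := ne_of_gt (hfpos x hxI)
        field_simp
        ring
      rw [hzero] at hd
      exact hd.mono_of_mem_nhdsWithin (Icc_mem_nhdsGE_of_mem hxIco)
  -- second constancy: on [x_m, b]
  have hconst2 : ∀ x ∈ Icc x_m b, (fun t => u t / f (φ t) + t - G (φ t)) x
      = (fun t => u t / f (φ t) + t - G (φ t)) x_m := by
    apply constant_of_has_deriv_right_zero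
    · exact ((hdivc.mono (Icc_subset_Icc hxmI.1 le_rfl)).add continuousOn_id).sub
        (hGφc.mono (Icc_subset_Icc hxmI.1 le_rfl))
    · intro x hx
      have hxI : x ∈ Icc a b := ⟨le_trans hxmI.1 hx.1, hx.2.le⟩
      have hxIco : x ∈ Ico a b := ⟨le_trans hxmI.1 hx.1, hx.2⟩
      have hd := ((hder x hxI).add (hasDerivWithinAt_id x _)).sub (hGder x hxI)
      have hzero : (-(f (φ x)) * f (φ x) - u x * (f' (φ x) * u x)) / f (φ x) ^ 2 + 1
          - gneg (φ x) * u x = 0 := by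
        have hx1 : u x ≤ 0 := husign2 x ⟨hx.1, hx.2.le⟩
        have h2 : Real.sqrt (2 * (F r - F (φ x))) = -u x := by
          rw [hsqrt x hxI, abs_of_nonpos hx1]
        rw [hgneg]
        simp only
        rw [h2]
        have hfne : f (φ x) ≠ 0 := ne_of_gt (hfpos x hxI)
        field_simp
        ring
      rw [hzero] at hd
      exact hd.mono_of_mem_nhdsWithin (Icc_mem_nhdsGE_of_mem hxIco)
  have hGa : G (φ a) = 0 := intervalIntegral.integral_same
  have e1 := hconst1 x_m (right_mem_Icc.2 hxmI.1)
  have e2 := hconst2 b (right_mem_Icc.2 hxmI.2)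
  simp only at e1 e2
  rw [hum, hφxm, hGa, zero_div] at e1
  rw [hub, hbb, hum, hφxm, hGa, zero_div] at e2
  refine ⟨r, hrmem.1, hrlt, hFr, hua, ?_⟩
  have e1' : x_m + G r = u a / f (φ a) + a := by linarith
  have e2' : -u a / f (φ a) + b = x_m - G r := by linarith
  have : b - a = 2 * (u a / f (φ a)) - 2 * G r := by
    have hnd : -u a / f (φ a) = -(u a / f (φ a)) := by ring
    rw [hnd] at e2'
    linarith
  rw [this, hG]
  ring

end Key
section Parts

variable {f F f' : ℝ → ℝ} {φs φ0 : ℝ}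

lemma part2_abstract (hFd : ∀ y, HasDerivAt F (f y) y) (hfd : ∀ y, HasDerivAt f (f' y) y)
    (hf'neg : ∀ y, f' y < 0) (hf'cont : Continuous f') (hs : f φs = 0)
    (h0 : φ0 < φs) (φf uf : ℝ → ℝ → ℝ)
    (hsol : ∀ L : ℝ, 0 < L →
      (∀ x ∈ Icc (-(L/2)) (L/2), HasDerivWithinAt (φf L) (uf L x) (Icc (-(L/2)) (L/2)) x ∧
        HasDerivWithinAt (uf L) (-(f (φf L x))) (Icc (-(L/2)) (L/2)) x) ∧
      φf L (-(L/2)) = φ0 ∧ φf L (L/2) = φ0)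
    (σ : ℝ → ℝ) (hσ : ∀ L, σ L = |uf L (-(L/2))|) :
    StrictMonoOn σ (Ioi (0:ℝ)) := by
  have hfa : StrictAnti f := strictAnti_of_deriv_neg
    (fun y => by rw [(hfd y).deriv]; exact hf'neg y)
  have hfc : Continuous f := Differentiable.continuous (fun y => (hfd y).differentiableAt)
  have hFc : Continuous F := Differentiable.continuous (fun y => (hFd y).differentiableAt)
  have hfφ0 : 0 < f φ0 := fpos hfa hs h0
  have hkey : ∀ L : ℝ, 0 < L → ∃ r, φ0 ≤ r ∧ r < φs ∧
      F r = (uf L (-(L/2))) ^ 2 / 2 + F φ0 ∧ 0 < uf L (-(L/2)) ∧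
      L = 2 * (uf L (-(L/2))) / f φ0
        - 2 * ∫ y in φ0..r, Real.sqrt (2 * (F r - F y)) * f' y / f y ^ 2 := by
    intro L hL
    obtain ⟨hsolL, hbc1, hbc2⟩ := hsol L hL
    have hab : -(L/2) < L/2 := by linarith
    obtain ⟨r, h1, h2, h3, h4, h5⟩ := key hFd hfd hf'neg hf'cont hs hab hsolL
      (by rw [hbc1, hbc2]) (by rw [hbc1]; exact h0)
    rw [hbc1] at h1 h3 h5
    exact ⟨r, h1, h2, h3, h4, by linarith [h5]⟩
  intro L1 hL1 L2 hL2 h12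
  obtain ⟨r1, hr1a, hr1b, hr1c, hr1d, hr1e⟩ := hkey L1 hL1
  obtain ⟨r2, hr2a, hr2b, hr2c, hr2d, hr2e⟩ := hkey L2 hL2
  by_contra hcon
  push_neg at hcon
  rw [hσ L1, hσ L2, abs_of_pos hr1d, abs_of_pos hr2d] at hcon
  have hu21 : uf L2 (-(L2/2)) ≤ uf L1 (-(L1/2)) := hcon
  have hF21 : F r2 ≤ F r1 := by
    rw [hr1c, hr2c]; nlinarith
  have hrr : r2 ≤ r1 := by
    by_contra hcc
    push_neg at hcc
    exact absurd (FmonoIic hFd hfa hs hr1b.le hr2b.le hcc) (not_lt.2 hF21)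
  set g1 : ℝ → ℝ := fun y => Real.sqrt (2 * (F r1 - F y)) * f' y / f y ^ 2 with hg1
  set g2 : ℝ → ℝ := fun y => Real.sqrt (2 * (F r2 - F y)) * f' y / f y ^ 2 with hg2
  have hg1c : ContinuousOn g1 (Iio φs) := by
    apply ContinuousOn.div
    · exact ((continuous_sqrt.comp (continuous_const.mul (continuous_const.sub hFc))).mul
        hf'cont).continuousOn
    · exact (hfc.pow 2).continuousOn
    · exact fun y hy => pow_ne_zero _ (ne_of_gt (fpos hfa hs hy))
  have hg2c : ContinuousOn g2 (Iio φs) := by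
    apply ContinuousOn.div
    · exact ((continuous_sqrt.comp (continuous_const.mul (continuous_const.sub hFc))).mul
        hf'cont).continuousOn
    · exact (hfc.pow 2).continuousOn
    · exact fun y hy => pow_ne_zero _ (ne_of_gt (fpos hfa hs hy))
  have hsub1 : uIcc φ0 r2 ⊆ Iio φs := fun t ht => lt_of_le_of_lt ht.2 (max_lt h0 hr2b)
  have hsub2 : uIcc r2 r1 ⊆ Iio φs := fun t ht => lt_of_le_of_lt ht.2 (max_lt hr2b hr1b)
  have hi1 : IntervalIntegrable g1 MeasureTheory.volume φ0 r2 :=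
    (hg1c.mono hsub1).intervalIntegrable
  have hi2 : IntervalIntegrable g1 MeasureTheory.volume r2 r1 :=
    (hg1c.mono hsub2).intervalIntegrable
  have hi3 : IntervalIntegrable g2 MeasureTheory.volume φ0 r2 :=
    (hg2c.mono hsub1).intervalIntegrable
  have hsplit : ∫ y in φ0..r1, g1 y
      = (∫ y in φ0..r2, g1 y) + ∫ y in r2..r1, g1 y :=
    (intervalIntegral.integral_add_adjacent_intervals hi1 hi2).symm
  have hg1nonpos : ∀ y, y < φs → g1 y ≤ 0 := by
    intro y hyφs
    have h1 : f' y ≤ 0 := (hf'neg y).le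
    have h2 : (0:ℝ) ≤ Real.sqrt (2 * (F r1 - F y)) := Real.sqrt_nonneg _
    have h3 : (0:ℝ) < f y ^ 2 := pow_pos (fpos hfa hs hyφs) 2
    exact div_nonpos_iff.2 (Or.inr ⟨mul_nonpos_of_nonneg_of_nonpos h2 h1, h3.le⟩)
  have hpiece : ∫ y in r2..r1, g1 y ≤ 0 := by
    have hnn : (0:ℝ) ≤ ∫ y in r2..r1, -g1 y := by
      apply intervalIntegral.integral_nonneg hrr
      intro y hy
      rw [neg_nonneg]
      exact hg1nonpos y (lt_of_le_of_lt hy.2 hr1b)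
    rw [intervalIntegral.integral_neg] at hnn
    linarith
  have hmono : ∫ y in φ0..r2, g1 y ≤ ∫ y in φ0..r2, g2 y := by
    apply intervalIntegral.integral_mono_on hr2a hi1 hi3
    intro y hy
    have hyφs : y < φs := lt_of_le_of_lt hy.2 hr2b
    have hfy2 : (0:ℝ) < f y ^ 2 := pow_pos (fpos hfa hs hyφs) 2
    have hsq : Real.sqrt (2 * (F r2 - F y)) ≤ Real.sqrt (2 * (F r1 - F y)) :=
      Real.sqrt_le_sqrt (by linarith)
    have hmul : Real.sqrt (2 * (F r1 - F y)) * f' y ≤ Real.sqrt (2 * (F r2 - F y)) * f' y :=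
      mul_le_mul_of_nonpos_right hsq (hf'neg y).le
    exact div_le_div_of_nonneg_right hmul hfy2.le
  have hI : ∫ y in φ0..r1, g1 y ≤ ∫ y in φ0..r2, g2 y := by
    rw [hsplit]; linarith
  have hdivle : 2 * uf L2 (-(L2/2)) / f φ0 ≤ 2 * uf L1 (-(L1/2)) / f φ0 :=
    div_le_div_of_nonneg_right (by linarith) hfφ0.le
  have hL21 : L2 ≤ L1 := by
    rw [hr1e, hr2e]
    linarith
  exact absurd h12 (not_lt.2 hL21)

lemma part3_abstract (hFd : ∀ y, HasDerivAt F (f y) y) (hfd : ∀ y, HasDerivAt f (f' y) y)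
    (hf'neg : ∀ y, f' y < 0) (hf'cont : Continuous f') (hs : f φs = 0)
    (h0 : φ0 < φs) (φf uf : ℝ → ℝ → ℝ)
    (hsol : ∀ L : ℝ, 0 < L →
      (∀ x ∈ Icc (-(L/2)) (L/2), HasDerivWithinAt (φf L) (uf L x) (Icc (-(L/2)) (L/2)) x ∧
        HasDerivWithinAt (uf L) (-(f (φf L x))) (Icc (-(L/2)) (L/2)) x) ∧
      φf L (-(L/2)) = φ0 ∧ φf L (L/2) = φ0)
    (σ : ℝ → ℝ) (hσ : ∀ L, σ L = |uf L (-(L/2))|) :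
    Tendsto σ atTop (𝓝 (Real.sqrt (2 * (F φs - F φ0)))) := by
  have hfa : StrictAnti f := strictAnti_of_deriv_neg
    (fun y => by rw [(hfd y).deriv]; exact hf'neg y)
  have hFc : Continuous F := Differentiable.continuous (fun y => (hFd y).differentiableAt)
  set Efun : ℝ → ℝ := fun L => (uf L (-(L/2))) ^ 2 / 2 + F φ0 with hEfun
  have hbasics : ∀ L : ℝ, 0 < L → F φ0 ≤ Efun L ∧ Efun L ≤ F φs := by
    intro L hL
    obtain ⟨hsolL, hbc1, hbc2⟩ := hsol L hL
    have hab : -(L/2) < L/2 := by linarith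
    constructor
    · simp only [hEfun]; nlinarith [sq_nonneg (uf L (-(L/2)))]
    · simp only [hEfun]
      have := E_le_Fmax hFd hfa hs hab hsolL (by rw [hbc1, hbc2])
      rwa [hbc1] at this
  have htendE : Tendsto Efun atTop (𝓝 (F φs)) := by
    rw [tendsto_order]
    constructor
    · intro c hc
      by_cases hcφ0 : c < F φ0
      · filter_upwards [eventually_gt_atTop (0:ℝ)] with L hL
        exact lt_of_lt_of_le hcφ0 (hbasics L hL).1
      · push_neg at hcφ0
        obtain ⟨r, hrmem, hFr⟩ := intermediate_value_Icc h0.le hFc.continuousOn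
          (⟨hcφ0, hc.le⟩ : c ∈ Icc (F φ0) (F φs))
        have hrlt : r < φs := by
          rcases eq_or_lt_of_le hrmem.2 with h | h
          · exfalso; rw [h] at hFr; rw [hFr] at hc; exact absurd hc (lt_irrefl _)
          · exact h
        have hδ : 0 < f r := fpos hfa hs hrlt
        set M : ℝ := Real.sqrt (2 * (F φs - F φ0)) with hM
        filter_upwards [eventually_gt_atTop (max 0 (2 * M / f r))] with L hL
        have hL0 : 0 < L := lt_of_le_of_lt (le_max_left _ _) hL
        by_contra hcon
        push_neg at hcon
        obtain ⟨hsolL, hbc1, hbc2⟩ := hsol L hL0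
        have hab : -(L/2) < L/2 := by linarith
        have hlen := length_le hFd hfa hs hab hsolL (by rw [hbc1, hbc2]) (by rw [hbc1]; exact h0)
          hrlt (by rw [hbc1]; exact hrmem.1)
          (by rw [hbc1, hFr]; simp only [hEfun] at hcon; linarith)
        rw [hbc1] at hlen
        have : L ≤ 2 * M / f r := by linarith [hlen]
        exact absurd this (not_le.2 (lt_of_le_of_lt (le_max_right _ _) hL))
    · intro c hc
      filter_upwards [eventually_gt_atTop (0:ℝ)] with L hL
      exact lt_of_le_of_lt (hbasics L hL).2 hc
  have hσeq : (fun L => Real.sqrt (2 * (Efun L - F φ0))) =ᶠ[atTop] σ := by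
    filter_upwards [eventually_gt_atTop (0:ℝ)] with L hL
    rw [hσ L]
    have : 2 * (Efun L - F φ0) = (uf L (-(L/2))) ^ 2 := by simp only [hEfun]; ring
    rw [this, Real.sqrt_sq_eq_abs]
  have := (((htendE.sub (tendsto_const_nhds : Tendsto (fun _ : ℝ => F φ0) atTop _)).const_mul
    (2:ℝ)).sqrt : Tendsto (fun L => Real.sqrt (2 * (Efun L - F φ0))) atTop
      (𝓝 (Real.sqrt (2 * (F φs - F φ0)))))
  exact this.congr' hσeq

end Parts
section Flip

variable {f F f' : ℝ → ℝ} {φs φ0 : ℝ}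

lemma flip_data (hFd : ∀ y, HasDerivAt F (f y) y) (hfd : ∀ y, HasDerivAt f (f' y) y)
    (hf'neg : ∀ y, f' y < 0) (hf'cont : Continuous f') (hs : f φs = 0)
    (h0 : φs < φ0) (φf uf : ℝ → ℝ → ℝ)
    (hsol : ∀ L : ℝ, 0 < L →
      (∀ x ∈ Icc (-(L/2)) (L/2), HasDerivWithinAt (φf L) (uf L x) (Icc (-(L/2)) (L/2)) x ∧
        HasDerivWithinAt (uf L) (-(f (φf L x))) (Icc (-(L/2)) (L/2)) x) ∧
      φf L (-(L/2)) = φ0 ∧ φf L (L/2) = φ0) :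
    (∀ y, HasDerivAt (fun t => F (2*φs - t)) ((fun t => -f (2*φs - t)) y) y) ∧
    (∀ y, HasDerivAt (fun t => -f (2*φs - t)) ((fun t => f' (2*φs - t)) y) y) ∧
    (∀ y, (fun t => f' (2*φs - t)) y < 0) ∧
    Continuous (fun t => f' (2*φs - t)) ∧
    ((fun t => -f (2*φs - t)) φs = 0) ∧
    (2*φs - φ0 < φs) ∧
    (∀ L : ℝ, 0 < L →
      (∀ x ∈ Icc (-(L/2)) (L/2),
        HasDerivWithinAt (fun t => 2*φs - φf L t) ((fun t => -uf L t) x) (Icc (-(L/2)) (L/2)) x ∧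
        HasDerivWithinAt (fun t => -uf L t)
          (-((fun t => -f (2*φs - t)) ((fun t => 2*φs - φf L t) x))) (Icc (-(L/2)) (L/2)) x) ∧
      (fun t => 2*φs - φf L t) (-(L/2)) = 2*φs - φ0 ∧
      (fun t => 2*φs - φf L t) (L/2) = 2*φs - φ0) := by
  refine ⟨?_, ?_, ?_, ?_, ?_, by linarith, ?_⟩
  · intro y
    have h1 : HasDerivAt (fun t : ℝ => 2*φs - t) (-1) y := (hasDerivAt_id y).const_sub (2*φs)
    have : HasDerivAt (fun t => F (2*φs - t)) (f (2*φs - y) * -1) y := (hFd (2*φs - y)).comp y h1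
    simpa using this
  · intro y
    have h1 : HasDerivAt (fun t : ℝ => 2*φs - t) (-1) y := (hasDerivAt_id y).const_sub (2*φs)
    have : HasDerivAt (fun t => -f (2*φs - t)) (-(f' (2*φs - y) * -1)) y :=
      ((hfd (2*φs - y)).comp y h1).neg
    simpa using this
  · exact fun y => hf'neg _
  · exact hf'cont.comp (continuous_const.sub continuous_id)
  · simp only [show 2*φs - φs = φs by ring, hs, neg_zero]
  · intro L hL
    obtain ⟨hsolL, hbc1, hbc2⟩ := hsol L hL
    refine ⟨?_, by simp only; rw [hbc1], by simp only; rw [hbc2]⟩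
    intro x hx
    constructor
    · exact ((hsolL x hx).1).const_sub (2*φs)
    · have : HasDerivWithinAt (fun t => -uf L t) (-(-(f (φf L x)))) (Icc (-(L/2)) (L/2)) x :=
        ((hsolL x hx).2).neg
      convert this using 1
      simp only [show ∀ t : ℝ, 2*φs - (2*φs - t) = t from fun t => by ring]

lemma part2_flip (hFd : ∀ y, HasDerivAt F (f y) y) (hfd : ∀ y, HasDerivAt f (f' y) y)
    (hf'neg : ∀ y, f' y < 0) (hf'cont : Continuous f') (hs : f φs = 0)
    (h0 : φs < φ0) (φf uf : ℝ → ℝ → ℝ)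
    (hsol : ∀ L : ℝ, 0 < L →
      (∀ x ∈ Icc (-(L/2)) (L/2), HasDerivWithinAt (φf L) (uf L x) (Icc (-(L/2)) (L/2)) x ∧
        HasDerivWithinAt (uf L) (-(f (φf L x))) (Icc (-(L/2)) (L/2)) x) ∧
      φf L (-(L/2)) = φ0 ∧ φf L (L/2) = φ0)
    (σ : ℝ → ℝ) (hσ : ∀ L, σ L = |uf L (-(L/2))|) :
    StrictMonoOn σ (Ioi (0:ℝ)) := by
  obtain ⟨h1, h2, h3, h4, h5, h6, h7⟩ :=
    flip_data hFd hfd hf'neg hf'cont hs h0 φf uf hsol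
  exact part2_abstract h1 h2 h3 h4 h5 h6 (fun L t => 2*φs - φf L t) (fun L t => -uf L t) h7
    σ (fun L => by rw [hσ L]; exact (abs_neg _).symm)

lemma part3_flip (hFd : ∀ y, HasDerivAt F (f y) y) (hfd : ∀ y, HasDerivAt f (f' y) y)
    (hf'neg : ∀ y, f' y < 0) (hf'cont : Continuous f') (hs : f φs = 0)
    (h0 : φs < φ0) (φf uf : ℝ → ℝ → ℝ)
    (hsol : ∀ L : ℝ, 0 < L →
      (∀ x ∈ Icc (-(L/2)) (L/2), HasDerivWithinAt (φf L) (uf L x) (Icc (-(L/2)) (L/2)) x ∧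
        HasDerivWithinAt (uf L) (-(f (φf L x))) (Icc (-(L/2)) (L/2)) x) ∧
      φf L (-(L/2)) = φ0 ∧ φf L (L/2) = φ0)
    (σ : ℝ → ℝ) (hσ : ∀ L, σ L = |uf L (-(L/2))|) :
    Tendsto σ atTop (𝓝 (Real.sqrt (2 * (F φs - F φ0)))) := by
  obtain ⟨h1, h2, h3, h4, h5, h6, h7⟩ :=
    flip_data hFd hfd hf'neg hf'cont hs h0 φf uf hsol
  have := part3_abstract h1 h2 h3 h4 h5 h6 (fun L t => 2*φs - φf L t) (fun L t => -uf L t) h7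
    σ (fun L => by rw [hσ L]; exact (abs_neg _).symm)
  have heq : (fun t => F (2*φs - t)) φs - (fun t => F (2*φs - t)) (2*φs - φ0)
      = F φs - F φ0 := by
    simp only
    rw [show 2*φs - φs = φs by ring, show 2*φs - (2*φs - φ0) = φ0 by ring]
  rwa [heq] at this

end Flip

/-- A (C²) solution of the PB equation `φ'' + f(φ) = 0` on `[a, b]`, written as the
first-order planar system `φ' = u`, `u' = -f(φ)`. -/
def IsPBSol (f : ℝ → ℝ) (a b : ℝ) (φ u : ℝ → ℝ) : Prop :=
  ∀ x ∈ Set.Icc a b,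
    HasDerivWithinAt φ (u x) (Set.Icc a b) x ∧
    HasDerivWithinAt u (-(f (φ x))) (Set.Icc a b) x

/-- Saturation of the surface charge density in the presence of an
equilibrium.  In the saddle case with unique zero `φ*` of `f`, let `φ_L` be the solution
of the equal-potential Dirichlet problem with value `φ0` on `[-L/2, L/2]` and
`σ(L) = |φ_L'(-L/2)|`.  Then `σ(L)` is the maximum of `|φ_L'|` over `[-L/2, L/2]`;
if `φ0 ≠ φ*` then `σ` is strictly increasing in `L`; and
`σ(L) → √(2 (F(φ*) − F(φ0)))` as `L → ∞`. -/
theorem stmt11 {N : ℕ} (hN : 1 ≤ N) (z c : Fin N → ℝ)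
    (hz : ∀ j, z j ≠ 0) (hc : ∀ j, 0 < c j) (q0 : ℝ)
    (f F : ℝ → ℝ)
    (hf : ∀ φ : ℝ, f φ = q0 + ∑ j, z j * c j * Real.exp (-(z j) * φ))
    (hF : ∀ φ : ℝ, F φ = q0 * φ - ∑ j, c j * Real.exp (-(z j) * φ))
    (hcase : (∃ i j, z i * z j < 0) ∨ (∀ j, z j * q0 < 0))
    (φstar : ℝ) (hstar : f φstar = 0)
    (φ0 : ℝ)
    (φf uf : ℝ → ℝ → ℝ)
    (hsol : ∀ L : ℝ, 0 < L →
      IsPBSol f (-(L / 2)) (L / 2) (φf L) (uf L) ∧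
      φf L (-(L / 2)) = φ0 ∧ φf L (L / 2) = φ0)
    (σ : ℝ → ℝ) (hσ : ∀ L : ℝ, σ L = |uf L (-(L / 2))|) :
    (∀ L : ℝ, 0 < L → ∀ x ∈ Set.Icc (-(L / 2)) (L / 2), |uf L x| ≤ σ L) ∧
    (φ0 ≠ φstar → StrictMonoOn σ (Set.Ioi (0 : ℝ))) ∧
    Tendsto σ atTop (𝓝 (Real.sqrt (2 * (F φstar - F φ0)))) := by
  have hFfun : F = fun t => q0 * t - ∑ j, c j * Real.exp (-(z j) * t) := funext hF
  have hffun : f = fun t => q0 + ∑ j, z j * c j * Real.exp (-(z j) * t) := funext hf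
  have hFd : ∀ y, HasDerivAt F (f y) y := by
    intro y
    rw [hf y, hFfun]
    exact concrete_Fd z c q0 y
  have hfd : ∀ y, HasDerivAt f ((fun t => -∑ j, z j ^ 2 * c j * Real.exp (-(z j) * t)) y) y := by
    intro y
    rw [hffun]
    exact concrete_fd z c q0 y
  have hf'neg : ∀ y, (fun t => -∑ j, z j ^ 2 * c j * Real.exp (-(z j) * t)) y < 0 :=
    fun y => concrete_f'neg z c hN hz hc y
  have hf'cont : Continuous (fun t => -∑ j, z j ^ 2 * c j * Real.exp (-(z j) * t)) := by
    apply Continuous.neg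
    apply continuous_finset_sum
    intro j _
    exact continuous_const.mul (Real.continuous_exp.comp (continuous_const.mul continuous_id))
  have hfa : StrictAnti f := strictAnti_of_deriv_neg
    (fun y => by rw [(hfd y).deriv]; exact hf'neg y)
  have hsol' : ∀ L : ℝ, 0 < L →
      (∀ x ∈ Icc (-(L/2)) (L/2), HasDerivWithinAt (φf L) (uf L x) (Icc (-(L/2)) (L/2)) x ∧
        HasDerivWithinAt (uf L) (-(f (φf L x))) (Icc (-(L/2)) (L/2)) x) ∧
      φf L (-(L/2)) = φ0 ∧ φf L (L/2) = φ0 :=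
    fun L hL => ⟨fun x hx => (hsol L hL).1 x hx, (hsol L hL).2.1, (hsol L hL).2.2⟩
  refine ⟨?_, ?_, ?_⟩
  · -- part 1 : σ L is the maximum of |uf L|
    intro L hL x hx
    obtain ⟨hsolL, hbc1, hbc2⟩ := hsol' L hL
    have hab : -(L/2) ≤ L/2 := by linarith
    have he := energy hFd hab hsolL x hx
    have hm := minFφ hFd hfa hstar hab hsolL (by rw [hbc1, hbc2]) x hx
    rw [hσ L]
    have h2 : (uf L x)^2 ≤ (uf L (-(L/2)))^2 := by nlinarith
    calc |uf L x| = Real.sqrt ((uf L x)^2) := (Real.sqrt_sq_eq_abs _).symm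
      _ ≤ Real.sqrt ((uf L (-(L/2)))^2) := Real.sqrt_le_sqrt h2
      _ = |uf L (-(L/2))| := Real.sqrt_sq_eq_abs _
  · -- part 2 : strict monotonicity
    intro hne
    rcases lt_trichotomy φ0 φstar with h | h | h
    · exact part2_abstract hFd hfd hf'neg hf'cont hstar h φf uf hsol' σ hσ
    · exact absurd h hne
    · exact part2_flip hFd hfd hf'neg hf'cont hstar h φf uf hsol' σ hσ
  · -- part 3 : saturation
    rcases lt_trichotomy φ0 φstar with h | h | h
    · exact part3_abstract hFd hfd hf'neg hf'cont hstar h φf uf hsol' σ hσ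
    · -- φ0 = φstar : σ vanishes identically for L > 0
      rw [← h, sub_self, mul_zero, Real.sqrt_zero]
      have hzero : ∀ᶠ L in atTop, (0 : ℝ) = σ L := by
        filter_upwards [eventually_gt_atTop (0:ℝ)] with L hL
        obtain ⟨hsolL, hbc1, hbc2⟩ := hsol' L hL
        have hab : -(L/2) < L/2 := by linarith
        have hE2 := E_le_Fmax hFd hfa hstar hab hsolL (by rw [hbc1, hbc2])
        rw [hbc1, ← h] at hE2
        have h1 : (uf L (-(L/2)))^2 ≤ 0 := by linarith
        have h2 : uf L (-(L/2)) = 0 :=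
          (pow_eq_zero_iff (two_ne_zero)).1 (le_antisymm h1 (sq_nonneg _))
        rw [hσ L, h2, abs_zero]
      exact tendsto_const_nhds.congr' hzero
    · exact part3_flip hFd hfd hf'neg hf'cont hstar h φf uf hsol' σ hσ
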